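/- arXiv:2407.11960 — 3 statements merged into one kernel-verified Lean document; each statement's English description precedes it below -/
import Mathlib

section
/- Let q ≥ 2 and let Q = (1/q²!) ∑_{U ∈ S} U ⊗ U be the average of the two-fold tensor power over all q²×q² permutation matrices. Define the one-site vectors |∘⟩ = (1/√q) ∑_{a=0}^{q-1} |aa⟩ ∈ ℂ^q ⊗ ℂ^q and |♭⟩ = (1/q) ∑_{a,b=0}^{q-1} |ab⟩ ∈ ℂ^q ⊗ ℂ^q, and regard two-site states as elements of (ℂ^q ⊗ ℂ^q) ⊗ (ℂ^q ⊗ ℂ^q) after appropriate reordering of tensor factors. Then Q |∘⟩|∘⟩ = |∘⟩|∘⟩, Q |♭⟩|♭⟩ = |♭⟩|♭⟩, and Q |∘⟩|♭⟩ = Q |♭⟩|∘⟩ = (√q/(1+q)) (|∘⟩|∘⟩ + |♭⟩|♭⟩). -/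
open Kronecker

/-- The permutation matrix of a permutation `g` of the two-site computational basis. -/
def permMat (q : ℕ) (g : Equiv.Perm (Fin q × Fin q)) :
    Matrix (Fin q × Fin q) (Fin q × Fin q) ℝ :=
  fun i j => if i = g j then 1 else 0

/-- The average of `U ⊗ U` over all `q² × q²` permutation matrices. -/
noncomputable def avgQ (q : ℕ) :
    Matrix ((Fin q × Fin q) × (Fin q × Fin q)) ((Fin q × Fin q) × (Fin q × Fin q)) ℝ :=
  (((q ^ 2).factorial : ℝ))⁻¹ •
    ∑ g : Equiv.Perm (Fin q × Fin q), (permMat q g) ⊗ₖ (permMat q g)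

/-- The one-site replica state `|∘⟩ = q^{-1/2} ∑ₐ |aa⟩`. -/
noncomputable def circState (q : ℕ) : Fin q × Fin q → ℝ :=
  fun p => if p.1 = p.2 then (Real.sqrt q)⁻¹ else 0

/-- The one-site replica state `|♭⟩ = q⁻¹ ∑_{a,b} |ab⟩`. -/
noncomputable def flatState (q : ℕ) : Fin q × Fin q → ℝ :=
  fun _ => (q : ℝ)⁻¹

/-- A product of one-site replica states at two sites, with the replica indices
interleaved so that `avgQ` acts as `U ⊗ U` on the pair of physical sites in
each replica: the index `((s₁,s₂),(s₁',s₂'))` groups the two physical sites of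
replica 1 and replica 2 respectively. -/
def twoSite (q : ℕ) (a b : Fin q × Fin q → ℝ) :
    ((Fin q × Fin q) × (Fin q × Fin q)) → ℝ :=
  fun x => a (x.1.1, x.2.1) * b (x.1.2, x.2.2)


section Helpers
variable {α : Type*} [DecidableEq α] [Fintype α]

lemma sum_perm_inv (f : α → α → ℝ) (x y : α) :
    ∑ g : Equiv.Perm α, f (g⁻¹ x) (g⁻¹ y) = ∑ g : Equiv.Perm α, f (g x) (g y) :=
  Fintype.sum_equiv (Equiv.inv (Equiv.Perm α)) _ _ (fun _ => rfl)

lemma exists_perm_pair {x y x' y' : α} (hxy : x ≠ y) (hxy' : x' ≠ y') :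
    ∃ h : Equiv.Perm α, h x = x' ∧ h y = y' := by
  set w := Equiv.swap x x' y with hw
  have hwx' : w ≠ x' := by
    intro h
    apply hxy
    have := (Equiv.swap x x').injective (h.trans (Equiv.swap_apply_left x x').symm)
    exact this.symm
  refine ⟨(Equiv.swap w y') * Equiv.swap x x', ?_, ?_⟩
  · simp only [Equiv.Perm.mul_apply, Equiv.swap_apply_left]
    exact Equiv.swap_apply_of_ne_of_ne (Ne.symm hwx') hxy'
  · simp only [Equiv.Perm.mul_apply, ← hw, Equiv.swap_apply_left]

lemma sum_perm_pair_eq (f : α → α → ℝ) {x y x' y' : α} (hxy : x ≠ y) (hxy' : x' ≠ y') :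
    ∑ g : Equiv.Perm α, f (g x) (g y) = ∑ g : Equiv.Perm α, f (g x') (g y') := by
  obtain ⟨h, hx, hy⟩ := exists_perm_pair hxy hxy'
  exact (Fintype.sum_equiv (Equiv.mulRight h) _ _ (fun g => by
    simp [Equiv.coe_mulRight, Equiv.Perm.mul_apply, hx, hy])).symm

lemma sum_perm_offDiag (f : α → α → ℝ) {x y : α} (hxy : x ≠ y) :
    ((Fintype.card α * Fintype.card α - Fintype.card α : ℕ) : ℝ) *
      ∑ g : Equiv.Perm α, f (g x) (g y)
    = (Fintype.card (Equiv.Perm α) : ℝ) * ∑ p ∈ (Finset.univ : Finset α).offDiag, f p.1 p.2 := by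
  have key : ∑ p ∈ (Finset.univ : Finset α).offDiag, ∑ g : Equiv.Perm α, f (g p.1) (g p.2)
      = (Fintype.card α * Fintype.card α - Fintype.card α) •
          ∑ g : Equiv.Perm α, f (g x) (g y) := by
    calc ∑ p ∈ (Finset.univ : Finset α).offDiag, ∑ g : Equiv.Perm α, f (g p.1) (g p.2)
        = ∑ _p ∈ (Finset.univ : Finset α).offDiag, ∑ g : Equiv.Perm α, f (g x) (g y) := by
          refine Finset.sum_congr rfl (fun p hp => ?_)
          rw [Finset.mem_offDiag] at hp
          exact sum_perm_pair_eq f hp.2.2 hxy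
      _ = (Finset.univ : Finset α).offDiag.card • ∑ g : Equiv.Perm α, f (g x) (g y) :=
          Finset.sum_const _
      _ = _ := by rw [Finset.offDiag_card, Finset.card_univ]
  have key2 : ∑ p ∈ (Finset.univ : Finset α).offDiag, ∑ g : Equiv.Perm α, f (g p.1) (g p.2)
      = (Fintype.card (Equiv.Perm α)) • ∑ p ∈ (Finset.univ : Finset α).offDiag, f p.1 p.2 := by
    rw [Finset.sum_comm, ← Finset.card_univ, ← Finset.sum_const]
    refine Finset.sum_congr rfl (fun g _ => ?_)
    refine Finset.sum_nbij' (fun p => (g p.1, g p.2)) (fun p => (g⁻¹ p.1, g⁻¹ p.2))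
      ?_ ?_ ?_ ?_ ?_
    · intro p hp
      rw [Finset.mem_offDiag] at hp ⊢
      exact ⟨Finset.mem_univ _, Finset.mem_univ _, fun h => hp.2.2 (g.injective h)⟩
    · intro p hp
      rw [Finset.mem_offDiag] at hp ⊢
      exact ⟨Finset.mem_univ _, Finset.mem_univ _, fun h => hp.2.2 (g⁻¹.injective h)⟩
    · intro p _; simp
    · intro p _; simp
    · intro p _; rfl
  have := key.symm.trans key2
  rw [nsmul_eq_mul, nsmul_eq_mul] at this
  exact this

lemma sum_offDiag_eq (f : α × α → ℝ) :
    ∑ p ∈ (Finset.univ : Finset α).offDiag, f p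
      = (∑ p : α × α, f p) - ∑ z : α, f (z, z) := by
  have h0 : (Finset.univ : Finset α).offDiag
      = (Finset.univ : Finset (α × α)).filter (fun p => p.1 ≠ p.2) := by
    rw [← Finset.univ_product_univ]; ext p; simp
  rw [h0, Finset.sum_filter]
  have h2 : ∑ z : α, f (z, z) = ∑ p : α × α, if p.1 = p.2 then f p else 0 := by
    rw [Fintype.sum_prod_type]
    simp [Finset.sum_ite_eq]
  rw [h2, ← Finset.sum_sub_distrib]
  refine Finset.sum_congr rfl fun p _ => ?_
  by_cases h : p.1 = p.2 <;> simp [h]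

end Helpers


lemma avgQ_apply (q : ℕ) (v : ((Fin q × Fin q) × (Fin q × Fin q)) → ℝ)
    (i : (Fin q × Fin q) × (Fin q × Fin q)) :
    (avgQ q).mulVec v i
      = (((q ^ 2).factorial : ℝ))⁻¹ *
        ∑ g : Equiv.Perm (Fin q × Fin q), v (g i.1, g i.2) := by
  have h1 : ∀ g : Equiv.Perm (Fin q × Fin q),
      ∑ j, ((permMat q g) ⊗ₖ (permMat q g)) i j * v j = v (g⁻¹ i.1, g⁻¹ i.2) := by
    intro g
    rw [Finset.sum_eq_single (g⁻¹ i.1, g⁻¹ i.2)]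
    · simp [permMat, Matrix.kroneckerMap_apply]
    · intro j _ hj
      rcases eq_or_ne i.1 (g j.1) with h | h
      · rcases eq_or_ne i.2 (g j.2) with h2 | h2
        · exact absurd (Prod.ext_iff.mpr ⟨((Equiv.Perm.inv_eq_iff_eq).mpr h).symm,
            ((Equiv.Perm.inv_eq_iff_eq).mpr h2).symm⟩) hj
        · simp [permMat, Matrix.kroneckerMap_apply, h2]
      · simp [permMat, Matrix.kroneckerMap_apply, h]
    · simp
  show ∑ j, (avgQ q) i j * v j = _
  unfold avgQ
  simp only [Matrix.smul_apply, Matrix.sum_apply, smul_eq_mul, mul_assoc]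
  rw [← Finset.mul_sum]
  congr 1
  calc ∑ j, (∑ g : Equiv.Perm (Fin q × Fin q), ((permMat q g) ⊗ₖ (permMat q g)) i j) * v j
      = ∑ j, ∑ g : Equiv.Perm (Fin q × Fin q), ((permMat q g) ⊗ₖ (permMat q g)) i j * v j := by
        simp [Finset.sum_mul]
    _ = ∑ g : Equiv.Perm (Fin q × Fin q), ∑ j, ((permMat q g) ⊗ₖ (permMat q g)) i j * v j :=
        Finset.sum_comm
    _ = ∑ g : Equiv.Perm (Fin q × Fin q), v (g⁻¹ i.1, g⁻¹ i.2) :=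
        Finset.sum_congr rfl (fun g _ => h1 g)
    _ = _ := sum_perm_inv (fun a b => v (a, b)) i.1 i.2

lemma sqrt_inv_mul (q : ℕ) : (Real.sqrt q)⁻¹ * (Real.sqrt q)⁻¹ = ((q:ℝ))⁻¹ := by
  rw [← mul_inv, Real.mul_self_sqrt (by positivity)]

lemma twoSite_cc (q : ℕ) (j : (Fin q × Fin q) × (Fin q × Fin q)) :
    twoSite q (circState q) (circState q) j = if j.1 = j.2 then ((q:ℝ))⁻¹ else 0 := by
  unfold twoSite circState
  rcases eq_or_ne j.1.1 j.2.1 with h1 | h1 <;> rcases eq_or_ne j.1.2 j.2.2 with h2 | h2 <;>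
    simp [h1, h2, Prod.ext_iff, sqrt_inv_mul]

lemma twoSite_ff (q : ℕ) (j : (Fin q × Fin q) × (Fin q × Fin q)) :
    twoSite q (flatState q) (flatState q) j = (q:ℝ)⁻¹ * (q:ℝ)⁻¹ := rfl

lemma twoSite_cf (q : ℕ) (j : (Fin q × Fin q) × (Fin q × Fin q)) :
    twoSite q (circState q) (flatState q) j
      = if j.1.1 = j.2.1 then (Real.sqrt q)⁻¹ * (q:ℝ)⁻¹ else 0 := by
  unfold twoSite circState flatState
  rcases eq_or_ne j.1.1 j.2.1 with h1 | h1 <;> simp [h1]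

lemma twoSite_fc (q : ℕ) (j : (Fin q × Fin q) × (Fin q × Fin q)) :
    twoSite q (flatState q) (circState q) j
      = if j.1.2 = j.2.2 then (q:ℝ)⁻¹ * (Real.sqrt q)⁻¹ else 0 := by
  unfold twoSite circState flatState
  rcases eq_or_ne j.1.2 j.2.2 with h1 | h1 <;> simp [h1]

lemma card_perm_q (q : ℕ) :
    (Fintype.card (Equiv.Perm (Fin q × Fin q))) = (q^2).factorial := by
  rw [Fintype.card_perm]
  congr 1
  simp [Fintype.card_prod, sq]

lemma sum_fullT1 (q : ℕ) (r : ℝ) :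
    ∑ p : (Fin q × Fin q) × (Fin q × Fin q), (if p.1.1 = p.2.1 then r else 0)
      = (q:ℝ) * q * q * r := by
  simp only [Fintype.sum_prod_type]
  have h1 : ∀ a c : Fin q, ∑ _d : Fin q, (if a = c then r else 0)
      = (q:ℝ) * (if a = c then r else 0) := by
    intro a c; rw [Finset.sum_const, Finset.card_univ, Fintype.card_fin, nsmul_eq_mul]
  simp only [h1, ← Finset.mul_sum, Finset.sum_ite_eq, Finset.mem_univ, if_true,
    Finset.sum_const, Finset.card_univ, Fintype.card_fin, nsmul_eq_mul]
  ring

lemma sum_fullT2 (q : ℕ) (r : ℝ) :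
    ∑ p : (Fin q × Fin q) × (Fin q × Fin q), (if p.1.2 = p.2.2 then r else 0)
      = (q:ℝ) * q * q * r := by
  simp only [Fintype.sum_prod_type]
  simp only [Finset.sum_ite_eq, Finset.mem_univ, if_true,
    Finset.sum_const, Finset.card_univ, Fintype.card_fin, nsmul_eq_mul]
  ring

lemma twoSite_cc' (q : ℕ) (x y : Fin q × Fin q) :
    twoSite q (circState q) (circState q) (x, y) = if x = y then ((q:ℝ))⁻¹ else 0 :=
  twoSite_cc q (x, y)

lemma twoSite_ff' (q : ℕ) (x y : Fin q × Fin q) :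
    twoSite q (flatState q) (flatState q) (x, y) = (q:ℝ)⁻¹ * (q:ℝ)⁻¹ := rfl

lemma twoSite_cf' (q : ℕ) (x y : Fin q × Fin q) :
    twoSite q (circState q) (flatState q) (x, y)
      = if x.1 = y.1 then (Real.sqrt q)⁻¹ * (q:ℝ)⁻¹ else 0 :=
  twoSite_cf q (x, y)

lemma twoSite_fc' (q : ℕ) (x y : Fin q × Fin q) :
    twoSite q (flatState q) (circState q) (x, y)
      = if x.2 = y.2 then (q:ℝ)⁻¹ * (Real.sqrt q)⁻¹ else 0 :=
  twoSite_fc q (x, y)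

theorem avgQ_action_on_replica_states (q : ℕ) (hq : 2 ≤ q) :
    (avgQ q).mulVec (twoSite q (circState q) (circState q))
        = twoSite q (circState q) (circState q) ∧
    (avgQ q).mulVec (twoSite q (flatState q) (flatState q))
        = twoSite q (flatState q) (flatState q) ∧
    (avgQ q).mulVec (twoSite q (circState q) (flatState q))
        = (Real.sqrt q / (1 + q)) •
            (twoSite q (circState q) (circState q) + twoSite q (flatState q) (flatState q)) ∧
    (avgQ q).mulVec (twoSite q (flatState q) (circState q))
        = (Real.sqrt q / (1 + q)) •
            (twoSite q (circState q) (circState q) + twoSite q (flatState q) (flatState q)) := by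
  have hq2 : (2:ℝ) ≤ (q:ℝ) := by exact_mod_cast hq
  have hq0 : (q:ℝ) ≠ 0 := by intro h; rw [h] at hq2; norm_num at hq2
  set s : ℝ := Real.sqrt q with hsdef
  have hs : s * s = (q:ℝ) := Real.mul_self_sqrt (by positivity)
  have hs0 : s ≠ 0 := by
    intro h; rw [h, mul_zero] at hs; exact hq0 hs.symm
  have hNf : (((q^2).factorial : ℕ) : ℝ) ≠ 0 := Nat.cast_ne_zero.mpr (Nat.factorial_ne_zero _)
  have h1q : (1:ℝ) + q ≠ 0 := by positivity
  have hsub : q*q ≤ q*q*(q*q) := Nat.le_mul_of_pos_right _ (by nlinarith)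
  have h4 : (4:ℝ) ≤ (q:ℝ)*(q:ℝ) := by nlinarith
  have hden : (q:ℝ)*q*((q:ℝ)*q) - (q:ℝ)*q ≠ 0 := by
    nlinarith [h4, mul_le_mul_of_nonneg_left h4 (by positivity : (0:ℝ) ≤ (q:ℝ)*(q:ℝ))]
  have h1s : (1:ℝ) + s*s ≠ 0 := by rw [hs]; exact h1q
  have hden2 : (s*s)*(s*s)*((s*s)*(s*s)) - (s*s)*(s*s) ≠ 0 := by rw [hs]; exact hden
  refine ⟨?_, ?_, ?_, ?_⟩
  · -- circ-circ
    funext i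
    rw [avgQ_apply]
    have hc : ∀ g : Equiv.Perm (Fin q × Fin q),
        twoSite q (circState q) (circState q) (g i.1, g i.2)
          = twoSite q (circState q) (circState q) i := by
      intro g
      rw [twoSite_cc' q (g i.1) (g i.2), twoSite_cc q i]
      simp [EmbeddingLike.apply_eq_iff_eq]
    rw [Finset.sum_congr rfl (fun g _ => hc g), Finset.sum_const, Finset.card_univ,
      card_perm_q, nsmul_eq_mul, ← mul_assoc, inv_mul_cancel₀ hNf, one_mul]
  · -- flat-flat
    funext i
    rw [avgQ_apply,
      Finset.sum_congr rfl (fun (g : Equiv.Perm (Fin q × Fin q)) _ => twoSite_ff' q (g i.1) (g i.2)),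
      Finset.sum_const, Finset.card_univ, card_perm_q, nsmul_eq_mul, ← mul_assoc,
      inv_mul_cancel₀ hNf, one_mul, twoSite_ff]
  · -- circ-flat
    funext i
    rw [avgQ_apply,
      Finset.sum_congr rfl (fun (g : Equiv.Perm (Fin q × Fin q)) _ => twoSite_cf' q (g i.1) (g i.2))]
    simp only [Pi.smul_apply, Pi.add_apply, twoSite_cc, twoSite_ff, smul_eq_mul]
    by_cases h : i.1 = i.2
    · have hc : ∀ g : Equiv.Perm (Fin q × Fin q),
          (if (g i.1).1 = (g i.2).1 then (s)⁻¹ * (q:ℝ)⁻¹ else 0) = s⁻¹ * (q:ℝ)⁻¹ := by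
        intro g; rw [if_pos]; rw [h]
      rw [Finset.sum_congr rfl (fun g _ => hc g), Finset.sum_const, Finset.card_univ,
        card_perm_q, nsmul_eq_mul, ← mul_assoc, inv_mul_cancel₀ hNf, one_mul, if_pos h]
      rw [← hs]
      field_simp
      ring
    · have hco := sum_perm_offDiag
        (fun a b : Fin q × Fin q => if a.1 = b.1 then s⁻¹ * (q:ℝ)⁻¹ else 0) h
      beta_reduce at hco
      rw [sum_offDiag_eq, sum_fullT1, card_perm_q] at hco
      simp only [Fintype.card_prod, Fintype.card_fin, if_pos rfl] at hco
      rw [Finset.sum_const, Finset.card_univ, Fintype.card_prod, Fintype.card_fin,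
        nsmul_eq_mul, Nat.cast_sub hsub] at hco
      push_cast at hco
      rw [mul_comm] at hco
      rw [(eq_div_iff hden).mpr hco, if_neg h, ← hs]
      field_simp
      have h4' : (-1 + s^4 : ℝ) ≠ 0 := by
        have e4 : s^4 = (q:ℝ)*q := by rw [← hs]; ring
        rw [e4]; nlinarith
      linear_combination mul_inv_cancel₀ h4'
  · -- flat-circ
    funext i
    rw [avgQ_apply,
      Finset.sum_congr rfl (fun (g : Equiv.Perm (Fin q × Fin q)) _ => twoSite_fc' q (g i.1) (g i.2))]
    simp only [Pi.smul_apply, Pi.add_apply, twoSite_cc, twoSite_ff, smul_eq_mul]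
    by_cases h : i.1 = i.2
    · have hc : ∀ g : Equiv.Perm (Fin q × Fin q),
          (if (g i.1).2 = (g i.2).2 then (q:ℝ)⁻¹ * s⁻¹ else 0) = (q:ℝ)⁻¹ * s⁻¹ := by
        intro g; rw [if_pos]; rw [h]
      rw [Finset.sum_congr rfl (fun g _ => hc g), Finset.sum_const, Finset.card_univ,
        card_perm_q, nsmul_eq_mul, ← mul_assoc, inv_mul_cancel₀ hNf, one_mul, if_pos h]
      rw [← hs]
      field_simp
      ring
    · have hco := sum_perm_offDiag
        (fun a b : Fin q × Fin q => if a.2 = b.2 then (q:ℝ)⁻¹ * s⁻¹ else 0) h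
      beta_reduce at hco
      rw [sum_offDiag_eq, sum_fullT2, card_perm_q] at hco
      simp only [Fintype.card_prod, Fintype.card_fin, if_pos rfl] at hco
      rw [Finset.sum_const, Finset.card_univ, Fintype.card_prod, Fintype.card_fin,
        nsmul_eq_mul, Nat.cast_sub hsub] at hco
      push_cast at hco
      rw [mul_comm] at hco
      rw [(eq_div_iff hden).mpr hco, if_neg h, ← hs]
      field_simp
      have h4' : (-1 + s^4 : ℝ) ≠ 0 := by
        have e4 : s^4 = (q:ℝ)*q := by rw [← hs]; ring
        rw [e4]; nlinarith
      linear_combination mul_inv_cancel₀ h4'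
end

section
/- Let α be a real number and suppose u(x,y) satisfies u(x,y) = u(x-1,y) + α·u(x,y-1) for all x,y ≥ 1, with boundary values u(x,0) = φ_x for x ≥ 0 and u(0,y) = ψ_y for y ≥ 1. Then for all x, y ≥ 0, u(x,y) = α^y ∑_{m=0}^{x-1} C(y+m-1, m) φ_{x-m} + ∑_{n=0}^{y-1} α^n C(x+n-1, n) ψ_{y-n} + δ_{x,0} δ_{y,0} φ_0. -/
open Finset

private lemma claimA (φ : ℕ → ℝ) (x y : ℕ) :
    ∑ m ∈ range (x+1), ((Nat.choose (y+m) m : ℝ)) * φ (x+1-m)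
    = (∑ m ∈ range x, ((Nat.choose (y+m) m : ℝ)) * φ (x-m))
      + ∑ m ∈ range (x+1), ((Nat.choose (y+m-1) m : ℝ)) * φ (x+1-m) := by
  rw [Finset.sum_range_succ' (fun m => ((Nat.choose (y+m) m : ℝ)) * φ (x+1-m)) x,
      Finset.sum_range_succ' (fun m => ((Nat.choose (y+m-1) m : ℝ)) * φ (x+1-m)) x]
  simp only [Nat.add_sub_cancel, Nat.succ_sub_succ, Nat.add_zero, Nat.sub_zero]
  have h : ∀ m ∈ range x,
      ((Nat.choose (y+(m+1)) (m+1) : ℝ)) * φ (x-m)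
      = (Nat.choose (y+m) m : ℝ) * φ (x-m) + (Nat.choose (y+m) (m+1) : ℝ) * φ (x-m) := by
    intro m _
    have : y + (m+1) = (y+m) + 1 := by ring
    rw [this, Nat.choose_succ_succ]
    push_cast; ring
  rw [Finset.sum_congr rfl h, Finset.sum_add_distrib]
  simp
  ring

private lemma claimB (α : ℝ) (ψ : ℕ → ℝ) (x y : ℕ) :
    ∑ n ∈ range (y+1), α^n * ((Nat.choose (x+n) n : ℝ)) * ψ (y+1-n)
    = (∑ n ∈ range (y+1), α^n * ((Nat.choose (x+n-1) n : ℝ)) * ψ (y+1-n))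
      + α * ∑ n ∈ range y, α^n * ((Nat.choose (x+n) n : ℝ)) * ψ (y-n) := by
  rw [Finset.sum_range_succ' (fun n => α^n * ((Nat.choose (x+n) n : ℝ)) * ψ (y+1-n)) y,
      Finset.sum_range_succ' (fun n => α^n * ((Nat.choose (x+n-1) n : ℝ)) * ψ (y+1-n)) y,
      Finset.mul_sum]
  simp only [Nat.add_sub_cancel, Nat.succ_sub_succ, Nat.add_zero, Nat.sub_zero, pow_zero, one_mul]
  have h : ∀ n ∈ range y,
      α^(n+1) * ((Nat.choose (x+(n+1)) (n+1) : ℝ)) * ψ (y-n)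
      = α^(n+1) * (Nat.choose (x+n) (n+1) : ℝ) * ψ (y-n)
        + α * (α^n * (Nat.choose (x+n) n : ℝ) * ψ (y-n)) := by
    intro n _
    have : x + (n+1) = (x+n) + 1 := by ring
    rw [this, Nat.choose_succ_succ]
    push_cast; ring
  rw [Finset.sum_congr rfl h, Finset.sum_add_distrib]
  have hx : (Nat.choose x 0 : ℝ) = (Nat.choose (x - 1) 0 : ℝ) := by simp
  have e : ∀ n : ℕ, x + (n+1) - 1 = x + n := by intro n; omega
  simp only [e]
  rw [hx]
  ring

theorem two_dim_linear_recurrence_solution (α : ℝ) (u : ℕ → ℕ → ℝ) (φ ψ : ℕ → ℝ)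
    (hrec : ∀ x y : ℕ, 1 ≤ x → 1 ≤ y → u x y = u (x - 1) y + α * u x (y - 1))
    (hφ : ∀ x : ℕ, u x 0 = φ x)
    (hψ : ∀ y : ℕ, 1 ≤ y → u 0 y = ψ y) :
    ∀ x y : ℕ,
      u x y =
        α ^ y * ∑ m ∈ Finset.range x, (Nat.choose (y + m - 1) m : ℝ) * φ (x - m)
        + ∑ n ∈ Finset.range y, α ^ n * (Nat.choose (x + n - 1) n : ℝ) * ψ (y - n)
        + (if x = 0 ∧ y = 0 then φ 0 else 0) := by
  -- base case helpers
  have base_y0 : ∀ x : ℕ,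
      u x 0 =
        α ^ 0 * ∑ m ∈ Finset.range x, (Nat.choose (0 + m - 1) m : ℝ) * φ (x - m)
        + ∑ n ∈ Finset.range 0, α ^ n * (Nat.choose (x + n - 1) n : ℝ) * ψ (0 - n)
        + (if x = 0 ∧ 0 = 0 then φ 0 else 0) := by
    intro x
    rcases x with _ | k
    · simp [hφ]
    · rw [hφ]
      rw [Finset.sum_range_succ' (fun m => ((Nat.choose (0+m-1) m : ℝ)) * φ (k+1-m)) k]
      simp
  have base_x0 : ∀ y : ℕ, 1 ≤ y →
      u 0 y =
        α ^ y * ∑ m ∈ Finset.range 0, (Nat.choose (y + m - 1) m : ℝ) * φ (0 - m)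
        + ∑ n ∈ Finset.range y, α ^ n * (Nat.choose (0 + n - 1) n : ℝ) * ψ (y - n)
        + (if (0:ℕ) = 0 ∧ y = 0 then φ 0 else 0) := by
    intro y hy
    rcases y with _ | k
    · omega
    · rw [hψ _ hy]
      rw [Finset.sum_range_succ' (fun n => α^n * ((Nat.choose (0+n-1) n : ℝ)) * ψ (k+1-n)) k]
      simp
  intro x y
  induction x generalizing y with
  | zero =>
    rcases y with _ | k
    · exact base_y0 0
    · exact base_x0 (k+1) (by omega)
  | succ x ihx =>
    induction y with
    | zero => exact base_y0 (x+1)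
    | succ y ihy =>
      rw [hrec (x+1) (y+1) (by omega) (by omega)]
      simp only [Nat.add_sub_cancel]
      rw [ihx (y+1), ihy]
      have hδ1 : (if x = 0 ∧ y + 1 = 0 then φ 0 else 0) = 0 := by simp
      have hδ2 : (if x + 1 = 0 ∧ y = 0 then φ 0 else 0) = 0 := by simp
      have hδ3 : (if x + 1 = 0 ∧ y + 1 = 0 then φ 0 else 0) = 0 := by simp
      rw [hδ1, hδ2, hδ3]
      have e1 : ∀ m : ℕ, (y + 1) + m - 1 = y + m := by intro m; omega
      simp only [e1]
      have hA := claimA φ x y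
      have hB := claimB α ψ x y
      have e2 : ∀ n : ℕ, (x + 1) + n - 1 = x + n := by intro n; omega
      simp only [e2]
      rw [hA, hB]
      rw [pow_succ]
      ring
end

section
/- Suppose Q₂(m,n) (m ≥ 0, n ≥ 0 even) satisfies Q₂(m,n) = q^{-1}(2Q₂(m−1,n) + Q₂(m−1,n−2) + Q₂(m−1,n+2)) for n ≥ 2, Q₂(m,0) = q^{-1}(2Q₂(m−1,0) + Q₂(m−1,2)), and Q₂(0,n) = c^n for a constant c. Then Q₂(m,2n) = q^{−m} ∑_{k=0}^{m+n} c^{2k} ( C(2m, m+n−k) − C(2m, m−2−n−k) ). -/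
def ichoose (a b : ℤ) : ℤ :=
  if 0 ≤ b ∧ b ≤ a then (a.toNat.choose b.toNat : ℤ) else 0

lemma ichoose_eq (a : ℕ) (b : ℤ) :
    ichoose (a : ℤ) b = if 0 ≤ b then ((a.choose b.toNat : ℕ) : ℤ) else 0 := by
  unfold ichoose
  by_cases hb : 0 ≤ b
  · by_cases hba : b ≤ (a : ℤ)
    · simp [hb, hba]
    · rw [if_neg (by tauto), if_pos hb]
      rw [Nat.choose_eq_zero_of_lt (by omega)]
      simp
  · simp [hb]

lemma ichoose_natCast (a j : ℕ) : ichoose (a : ℤ) (j : ℤ) = (a.choose j : ℤ) := by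
  rw [ichoose_eq]
  simp

lemma ichoose_neg (a : ℕ) {b : ℤ} (hb : b < 0) : ichoose (a : ℤ) b = 0 := by
  rw [ichoose_eq, if_neg (by omega)]

lemma ichoose_gt (a : ℕ) {b : ℤ} (hb : (a : ℤ) < b) : ichoose (a : ℤ) b = 0 := by
  rw [ichoose_eq, if_pos (by omega), Nat.choose_eq_zero_of_lt (by omega)]
  simp

lemma ichoose_symm (a : ℕ) (b : ℤ) : ichoose (a : ℤ) b = ichoose (a : ℤ) ((a : ℤ) - b) := by
  rcases lt_or_ge b 0 with hb | hb
  · rw [ichoose_neg a hb, ichoose_gt a (by omega)]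
  rcases le_or_gt b (a : ℤ) with hba | hba
  · rw [ichoose_eq, if_pos hb, ichoose_eq, if_pos (by omega)]
    have h1 : ((a : ℤ) - b).toNat = a - b.toNat := by omega
    rw [h1, Nat.choose_symm (by omega)]
  · rw [ichoose_gt a hba, ichoose_neg a (by omega)]

lemma ichoose_pascal (a : ℕ) (b : ℤ) :
    ichoose ((a + 1 : ℕ) : ℤ) b = ichoose (a : ℤ) b + ichoose (a : ℤ) (b - 1) := by
  rcases lt_or_ge b 0 with hb | hb
  · rw [ichoose_neg _ hb, ichoose_neg a hb, ichoose_neg a (by omega)]; ring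
  rcases eq_or_lt_of_le hb with hb0 | hb1
  · rw [← hb0, ichoose_eq, if_pos le_rfl, ichoose_eq, if_pos le_rfl,
      ichoose_neg a (by norm_num)]
    simp
  · rw [ichoose_eq, if_pos hb, ichoose_eq, if_pos hb, ichoose_eq, if_pos (by omega)]
    have h1 : b.toNat = (b - 1).toNat + 1 := by omega
    rw [h1, Nat.choose_succ_succ']
    push_cast
    ring

lemma ichoose_pascal2 (m : ℕ) (b : ℤ) :
    ichoose ((2 * (m + 1) : ℕ) : ℤ) b
      = ichoose ((2 * m : ℕ) : ℤ) b + 2 * ichoose ((2 * m : ℕ) : ℤ) (b - 1)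
        + ichoose ((2 * m : ℕ) : ℤ) (b - 2) := by
  have e1 : 2 * (m + 1) = (2 * m + 1) + 1 := by ring
  rw [e1, ichoose_pascal (2 * m + 1) b, ichoose_pascal (2 * m) b,
    ichoose_pascal (2 * m) (b - 1)]
  have e2 : b - 1 - 1 = b - 2 := by ring
  rw [e2]
  ring

lemma gen_step (m : ℕ) (x y : ℤ) :
    ichoose ((2 * (m + 1) : ℕ) : ℤ) (x + 2) - ichoose ((2 * (m + 1) : ℕ) : ℤ) (y + 2)
      = 2 * (ichoose ((2 * m : ℕ) : ℤ) (x + 1) - ichoose ((2 * m : ℕ) : ℤ) (y + 1))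
        + (ichoose ((2 * m : ℕ) : ℤ) x - ichoose ((2 * m : ℕ) : ℤ) y)
        + (ichoose ((2 * m : ℕ) : ℤ) (x + 2) - ichoose ((2 * m : ℕ) : ℤ) (y + 2)) := by
  rw [ichoose_pascal2 m (x + 2), ichoose_pascal2 m (y + 2),
    show x + 2 - 1 = x + 1 from by ring, show x + 2 - 2 = x from by ring,
    show y + 2 - 1 = y + 1 from by ring, show y + 2 - 2 = y from by ring]
  ring

lemma gen_step0 (m : ℕ) (x y : ℤ) (hxy : x + y = 2 * (m : ℤ) + 2) :
    ichoose ((2 * (m + 1) : ℕ) : ℤ) (x + 1) - ichoose ((2 * (m + 1) : ℕ) : ℤ) (y + 1)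
      = 2 * (ichoose ((2 * m : ℕ) : ℤ) x - ichoose ((2 * m : ℕ) : ℤ) y)
        + (ichoose ((2 * m : ℕ) : ℤ) (x + 1) - ichoose ((2 * m : ℕ) : ℤ) (y + 1)) := by
  rw [ichoose_pascal2 m (x + 1), ichoose_pascal2 m (y + 1),
    show x + 1 - 1 = x from by ring, show x + 1 - 2 = x - 1 from by ring,
    show y + 1 - 1 = y from by ring, show y + 1 - 2 = y - 1 from by ring]
  rw [ichoose_symm (2 * m) (x - 1),
    show ((2 * m : ℕ) : ℤ) - (x - 1) = y - 1 from by push_cast; omega]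
  ring

noncomputable def Fsum (c : ℝ) (m n : ℕ) : ℝ :=
  ∑ k ∈ Finset.range (m + n + 1),
    c ^ (2 * k) *
      ((ichoose ((2 * m : ℕ) : ℤ) ((m : ℤ) + (n : ℤ) - (k : ℤ)) : ℝ)
        - (ichoose ((2 * m : ℕ) : ℤ) ((m : ℤ) + (n : ℤ) + 2 + (k : ℤ)) : ℝ))

lemma Fsum_eq (c : ℝ) (m n N : ℕ) (h : m + n + 1 ≤ N) :
    Fsum c m n = ∑ k ∈ Finset.range N,
      c ^ (2 * k) *
        ((ichoose ((2 * m : ℕ) : ℤ) ((m : ℤ) + (n : ℤ) - (k : ℤ)) : ℝ)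
          - (ichoose ((2 * m : ℕ) : ℤ) ((m : ℤ) + (n : ℤ) + 2 + (k : ℤ)) : ℝ)) := by
  unfold Fsum
  apply Finset.sum_subset (Finset.range_subset_range.2 h)
  intro k hk hnk
  simp only [Finset.mem_range, not_lt] at hk hnk
  rw [ichoose_neg _ (by omega), ichoose_gt _ (by push_cast; omega)]
  simp

lemma Fsum_zero (c : ℝ) (n : ℕ) : Fsum c 0 n = c ^ (2 * n) := by
  unfold Fsum
  rw [Finset.sum_eq_single_of_mem n (Finset.mem_range.2 (by omega))]
  · rw [show ((0 : ℕ) : ℤ) + (n : ℤ) - (n : ℤ) = (((0 : ℕ) : ℕ) : ℤ) from by push_cast; ring,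
      ichoose_natCast, ichoose_gt _ (by push_cast; omega)]
    simp
  · intro k hk hkn
    have hk' : k < n := by
      simp only [Finset.mem_range] at hk; omega
    rw [ichoose_gt _ (by push_cast; omega), ichoose_gt _ (by push_cast; omega)]
    simp

lemma Fsum_step (c : ℝ) (m n : ℕ) :
    Fsum c (m + 1) (n + 1) = 2 * Fsum c m (n + 1) + Fsum c m n + Fsum c m (n + 2) := by
  rw [Fsum_eq c (m + 1) (n + 1) (m + n + 3) (by omega), Fsum_eq c m (n + 1) (m + n + 3) (by omega),
    Fsum_eq c m n (m + n + 3) (by omega), Fsum_eq c m (n + 2) (m + n + 3) (by omega),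
    Finset.mul_sum, ← Finset.sum_add_distrib, ← Finset.sum_add_distrib]
  apply Finset.sum_congr rfl
  intro k _
  rw [show ((m + 1 : ℕ) : ℤ) + ((n + 1 : ℕ) : ℤ) - (k : ℤ)
        = ((m : ℤ) + (n : ℤ) - (k : ℤ)) + 2 from by push_cast; ring,
    show ((m + 1 : ℕ) : ℤ) + ((n + 1 : ℕ) : ℤ) + 2 + (k : ℤ)
        = ((m : ℤ) + (n : ℤ) + 2 + (k : ℤ)) + 2 from by push_cast; ring,
    show (m : ℤ) + ((n + 1 : ℕ) : ℤ) - (k : ℤ)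
        = ((m : ℤ) + (n : ℤ) - (k : ℤ)) + 1 from by push_cast; ring,
    show (m : ℤ) + ((n + 1 : ℕ) : ℤ) + 2 + (k : ℤ)
        = ((m : ℤ) + (n : ℤ) + 2 + (k : ℤ)) + 1 from by push_cast; ring,
    show (m : ℤ) + ((n + 2 : ℕ) : ℤ) - (k : ℤ)
        = ((m : ℤ) + (n : ℤ) - (k : ℤ)) + 2 from by push_cast; ring,
    show (m : ℤ) + ((n + 2 : ℕ) : ℤ) + 2 + (k : ℤ)
        = ((m : ℤ) + (n : ℤ) + 2 + (k : ℤ)) + 2 from by push_cast; ring]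
  have h := gen_step m ((m : ℤ) + (n : ℤ) - (k : ℤ)) ((m : ℤ) + (n : ℤ) + 2 + (k : ℤ))
  have h3 := congrArg (fun z : ℤ => (z : ℝ)) h
  simp only [Int.cast_add, Int.cast_sub, Int.cast_mul, Int.cast_ofNat, Int.cast_one,
    Int.cast_two] at h3
  linear_combination c ^ (2 * k) * h3

lemma Fsum_step0 (c : ℝ) (m : ℕ) :
    Fsum c (m + 1) 0 = 2 * Fsum c m 0 + Fsum c m 1 := by
  rw [Fsum_eq c (m + 1) 0 (m + 2) (by omega), Fsum_eq c m 0 (m + 2) (by omega),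
    Fsum_eq c m 1 (m + 2) (by omega),
    Finset.mul_sum, ← Finset.sum_add_distrib]
  apply Finset.sum_congr rfl
  intro k _
  rw [show ((m + 1 : ℕ) : ℤ) + ((0 : ℕ) : ℤ) - (k : ℤ)
        = ((m : ℤ) + ((0 : ℕ) : ℤ) - (k : ℤ)) + 1 from by push_cast; ring,
    show ((m + 1 : ℕ) : ℤ) + ((0 : ℕ) : ℤ) + 2 + (k : ℤ)
        = ((m : ℤ) + ((0 : ℕ) : ℤ) + 2 + (k : ℤ)) + 1 from by push_cast; ring,
    show (m : ℤ) + ((1 : ℕ) : ℤ) - (k : ℤ)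
        = ((m : ℤ) + ((0 : ℕ) : ℤ) - (k : ℤ)) + 1 from by push_cast; ring,
    show (m : ℤ) + ((1 : ℕ) : ℤ) + 2 + (k : ℤ)
        = ((m : ℤ) + ((0 : ℕ) : ℤ) + 2 + (k : ℤ)) + 1 from by push_cast; ring]
  have h := gen_step0 m ((m : ℤ) + ((0 : ℕ) : ℤ) - (k : ℤ))
    ((m : ℤ) + ((0 : ℕ) : ℤ) + 2 + (k : ℤ)) (by push_cast; ring)
  have h3 := congrArg (fun z : ℤ => (z : ℝ)) h
  simp only [Int.cast_add, Int.cast_sub, Int.cast_mul, Int.cast_ofNat, Int.cast_one,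
    Int.cast_two] at h3
  linear_combination c ^ (2 * k) * h3

lemma sum_eq_Fsum (c : ℝ) (m n : ℕ) :
    ∑ k ∈ Finset.range (m + n + 1),
        c ^ (2 * k) *
          (((2 * m).choose (m + n - k) : ℝ)
            - (ichoose (2 * m) ((m : ℤ) - 2 - n - k) : ℝ))
      = Fsum c m n := by
  unfold Fsum
  apply Finset.sum_congr rfl
  intro k hk
  have hk' : k ≤ m + n := by
    simp only [Finset.mem_range] at hk; omega
  have h1 : (((2 * m).choose (m + n - k) : ℕ) : ℝ)
      = ((ichoose ((2 * m : ℕ) : ℤ) ((m : ℤ) + (n : ℤ) - (k : ℤ)) : ℤ) : ℝ) := by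
    rw [show ((m : ℤ) + (n : ℤ) - (k : ℤ)) = ((m + n - k : ℕ) : ℤ) from by omega,
      ichoose_natCast]
    norm_num
  have h2 : (ichoose (2 * (m : ℤ)) ((m : ℤ) - 2 - n - k) : ℤ)
      = ichoose ((2 * m : ℕ) : ℤ) ((m : ℤ) + (n : ℤ) + 2 + (k : ℤ)) := by
    rw [show (2 * (m : ℤ)) = ((2 * m : ℕ) : ℤ) from by push_cast; ring,
      ichoose_symm (2 * m) ((m : ℤ) - 2 - n - k)]
    congr 1
    push_cast
    ring
  rw [h1, h2]

theorem purity_recurrence_solution (q c : ℝ) (hq : 0 < q) (Q₂ : ℕ → ℕ → ℝ)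
    (hrec : ∀ m n : ℕ, 1 ≤ m → 2 ≤ n → Even n →
      Q₂ m n = q⁻¹ * (2 * Q₂ (m - 1) n + Q₂ (m - 1) (n - 2) + Q₂ (m - 1) (n + 2)))
    (hrec0 : ∀ m : ℕ, 1 ≤ m → Q₂ m 0 = q⁻¹ * (2 * Q₂ (m - 1) 0 + Q₂ (m - 1) 2))
    (hinit : ∀ n : ℕ, Even n → Q₂ 0 n = c ^ n) :
    ∀ m n : ℕ,
      Q₂ m (2 * n) = q ^ (-(m : ℤ)) *
        ∑ k ∈ Finset.range (m + n + 1),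
          c ^ (2 * k) *
            (((2 * m).choose (m + n - k) : ℝ)
              - (ichoose (2 * m) ((m : ℤ) - 2 - n - k) : ℝ)) := by
  have hq0 : q ≠ 0 := ne_of_gt hq
  intro m
  induction m with
  | zero =>
    intro n
    rw [hinit (2 * n) ⟨n, two_mul n⟩, sum_eq_Fsum c 0 n, Fsum_zero]
    simp
  | succ m ih =>
    have hzq : ∀ m' : ℕ, q ^ (-((m' + 1 : ℕ) : ℤ)) = q⁻¹ * q ^ (-((m' : ℕ) : ℤ)) := by
      intro m'
      rw [← zpow_neg_one q, ← zpow_add₀ hq0]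
      congr 1
      push_cast
      ring
    intro n
    match n with
    | 0 =>
      rw [sum_eq_Fsum c (m + 1) 0]
      have h0 := hrec0 (m + 1) (by omega)
      simp only [Nat.add_sub_cancel] at h0
      have i0 := ih 0
      rw [show (2 * 0 : ℕ) = 0 from rfl, sum_eq_Fsum c m 0] at i0
      have i1 := ih 1
      rw [show (2 * 1 : ℕ) = 2 from rfl, sum_eq_Fsum c m 1] at i1
      rw [show (2 * 0 : ℕ) = 0 from rfl, h0, i0, i1, Fsum_step0, hzq m]
      ring
    | n + 1 =>
      rw [sum_eq_Fsum c (m + 1) (n + 1)]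
      have h0 := hrec (m + 1) (2 * (n + 1)) (by omega) (by omega) ⟨n + 1, two_mul (n + 1)⟩
      simp only [Nat.add_sub_cancel] at h0
      rw [show 2 * (n + 1) - 2 = 2 * n from by omega,
        show 2 * (n + 1) + 2 = 2 * (n + 2) from by ring] at h0
      have i0 := ih n
      rw [sum_eq_Fsum c m n] at i0
      have i1 := ih (n + 1)
      rw [sum_eq_Fsum c m (n + 1)] at i1
      have i2 := ih (n + 2)
      rw [sum_eq_Fsum c m (n + 2)] at i2
      rw [h0, i0, i1, i2, Fsum_step, hzq m]
      ring
end
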